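/- arXiv:1703.10785 — 4 statements merged into one kernel-verified Lean document; each statement's English description precedes it below -/
import Mathlib

section
/- The graph of h(x) = x/(1+x) is invariant under the Davis-Skodje flow: if z = (z₁, z₂) : I → ℝ² is a solution of the Davis-Skodje system with ε > 0 on an interval I containing t₀, with z₁(t₀) > 0 and z₂(t₀) = z₁(t₀)/(1+z₁(t₀)), then z₂(t) = z₁(t)/(1+z₁(t)) for all t ∈ I with t ≥ t₀. -/
/-- A function with derivative zero on an ord-connected set is constant there. -/
lemma const_of_hasDerivAt_zero {s : Set ℝ} (hs : Convex ℝ s) {f : ℝ → ℝ}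
    (hf : ∀ t ∈ s, HasDerivAt f 0 t) {x y : ℝ} (hx : x ∈ s) (hy : y ∈ s) :
    f y = f x := by
  have := Convex.norm_image_sub_le_of_norm_hasDerivWithin_le
    (f := f) (f' := fun _ => 0) (C := 0)
    (fun t ht => (hf t ht).hasDerivWithinAt) (fun t _ => by simp) hs hx hy
  have h0 : ‖f y - f x‖ ≤ 0 := by simpa using this
  have := le_antisymm h0 (norm_nonneg _)
  rw [norm_eq_zero, sub_eq_zero] at this
  exact this

/-- Invariance of the graph of `h(x) = x/(1+x)` under the Davis-Skodje flow:
a solution starting on the graph (with positive first component) stays on it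
in forward time. -/
theorem davisSkodje_graph_invariant (ε : ℝ) (hε : 0 < ε)
    (I : Set ℝ) (hI : I.OrdConnected) (t₀ : ℝ) (ht₀ : t₀ ∈ I)
    (z₁ z₂ : ℝ → ℝ)
    (hz₁ : ∀ t ∈ I, HasDerivAt z₁ (-(z₁ t)) t)
    (hz₂ : ∀ t ∈ I, HasDerivAt z₂
      ((1 / ε) * (-(z₂ t) + z₁ t / (1 + z₁ t)) - z₁ t / (1 + z₁ t) ^ 2) t)
    (hpos : 0 < z₁ t₀) (hinit : z₂ t₀ = z₁ t₀ / (1 + z₁ t₀)) :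
    ∀ t ∈ I, t₀ ≤ t → z₂ t = z₁ t / (1 + z₁ t) := by
  have hconv : Convex ℝ I := hI.convex
  -- Step 1: z₁ t * exp t is constant, hence z₁ > 0 on I.
  have hconst₁ : ∀ t ∈ I, z₁ t * Real.exp t = z₁ t₀ * Real.exp t₀ := by
    intro t ht
    refine const_of_hasDerivAt_zero hconv (f := fun t => z₁ t * Real.exp t) ?_ ht₀ ht
    intro s hs
    have := (hz₁ s hs).mul (Real.hasDerivAt_exp s)
    exact this.congr_deriv (by ring)
  have hpos' : ∀ t ∈ I, 0 < z₁ t := by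
    intro t ht
    have h := hconst₁ t ht
    have : 0 < z₁ t * Real.exp t := h ▸ mul_pos hpos (Real.exp_pos _)
    nlinarith [Real.exp_pos t]
  have hne : ∀ t ∈ I, (1 : ℝ) + z₁ t ≠ 0 := fun t ht => by
    have := hpos' t ht; positivity
  -- Step 2: w t := z₂ t - z₁ t / (1 + z₁ t) satisfies w' = -(1/ε) w,
  -- so w t * exp (t/ε) is constant.
  set w : ℝ → ℝ := fun t => z₂ t - z₁ t / (1 + z₁ t) with hw
  have hw' : ∀ t ∈ I, HasDerivAt w (-(1/ε) * w t) t := by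
    intro t ht
    have hden := hne t ht
    have hg : HasDerivAt (fun t => z₁ t / (1 + z₁ t))
        (-(z₁ t) / (1 + z₁ t) ^ 2) t := by
      have h1 : HasDerivAt (fun t => (1 : ℝ) + z₁ t) (-(z₁ t)) t := by
        exact ((hasDerivAt_const t (1:ℝ)).add (hz₁ t ht)).congr_deriv (by ring)
      have := (hz₁ t ht).div h1 hden
      exact this.congr_deriv (by ring)
    have := (hz₂ t ht).sub hg
    refine this.congr_deriv ?_
    have h2 : (1 + z₁ t) ≠ 0 := hden
    simp only [hw]
    field_simp
    ring
  have hconst₂ : ∀ t ∈ I, w t * Real.exp (t / ε) = w t₀ * Real.exp (t₀ / ε) := by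
    intro t ht
    refine const_of_hasDerivAt_zero hconv (f := fun t => w t * Real.exp (t / ε)) ?_ ht₀ ht
    intro s hs
    have hexp : HasDerivAt (fun t => Real.exp (t / ε)) (Real.exp (s / ε) * (1/ε)) s := by
      have : HasDerivAt (fun t : ℝ => t / ε) (1/ε) s := by
        simpa using (hasDerivAt_id s).div_const ε
      exact (Real.hasDerivAt_exp (s / ε)).comp s this
    have := (hw' s hs).mul hexp
    refine this.congr_deriv ?_
    ring
  have hw0 : w t₀ = 0 := by simp [hw, hinit]
  intro t ht hle
  have := hconst₂ t ht
  rw [hw0, zero_mul] at this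
  have : w t = 0 := by
    have he := Real.exp_pos (t / ε)
    exact (mul_eq_zero.mp this).resolve_right he.ne'
  simpa [hw, sub_eq_zero] using this
end

section
/- Fast exponential attraction to the slow invariant manifold: if z = (z₁, z₂) is a solution of the Davis-Skodje system with ε > 0 and z₁(0) > 0, then for all t ≥ 0 the defect δ(t) = z₂(t) - z₁(t)/(1+z₁(t)) satisfies |δ(t)| = |δ(0)| e^{-t/ε}; in particular every solution converges to the slow invariant manifold exponentially fast with rate 1/ε. -/
open Real Filter

/-- Fast exponential attraction to the slow invariant manifold of the Davis-Skodje system: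
the defect `δ(t) = z₂(t) - z₁(t)/(1+z₁(t))` of any solution with `z₁(0) > 0` satisfies
`|δ(t)| = |δ(0)| e^{-t/ε}` for `t ≥ 0`; in particular the solution converges to the slow
invariant manifold exponentially fast with rate `1/ε`. -/
theorem davisSkodje_fast_attraction (ε : ℝ) (hε : 0 < ε) (z₁ z₂ : ℝ → ℝ)
    (hz₁ : ∀ t ∈ Set.Ici (0 : ℝ), HasDerivAt z₁ (-(z₁ t)) t)
    (hz₂ : ∀ t ∈ Set.Ici (0 : ℝ), HasDerivAt z₂
      ((1 / ε) * (-(z₂ t) + z₁ t / (1 + z₁ t)) - z₁ t / (1 + z₁ t) ^ 2) t)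
    (hpos : 0 < z₁ 0) :
    (∀ t : ℝ, 0 ≤ t →
      |z₂ t - z₁ t / (1 + z₁ t)| = |z₂ 0 - z₁ 0 / (1 + z₁ 0)| * Real.exp (-t / ε)) ∧
    Tendsto (fun t : ℝ => z₂ t - z₁ t / (1 + z₁ t)) atTop (nhds 0) := by
  -- z₁ is positive on [0, ∞)
  have hz₁pos : ∀ t : ℝ, 0 ≤ t → 0 < z₁ t := by
    intro t ht
    have hconst : z₁ t * Real.exp t = z₁ 0 * Real.exp 0 := by
      apply constant_of_has_deriv_right_zero (f := fun s => z₁ s * Real.exp s)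
        (a := 0) (b := t)
      · intro s hs
        exact ((hz₁ s hs.1).mul (Real.hasDerivAt_exp s)).continuousAt.continuousWithinAt
      · intro s hs
        have h : HasDerivAt (fun s => z₁ s * Real.exp s)
            (-(z₁ s) * Real.exp s + z₁ s * Real.exp s) s :=
          (hz₁ s hs.1).mul (Real.hasDerivAt_exp s)
        have h0 : -(z₁ s) * Real.exp s + z₁ s * Real.exp s = 0 := by ring
        exact (h0 ▸ h).hasDerivWithinAt
      · exact ⟨ht, le_refl t⟩
    have : z₁ t = z₁ 0 * Real.exp 0 / Real.exp t := by
      field_simp at hconst ⊢; linarith [hconst]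
    rw [this]
    positivity
  -- the defect satisfies δ(t) = δ(0) exp(-t/ε)
  have key : ∀ t : ℝ, 0 ≤ t →
      z₂ t - z₁ t / (1 + z₁ t) = (z₂ 0 - z₁ 0 / (1 + z₁ 0)) * Real.exp (-t / ε) := by
    intro t ht
    have hδ : ∀ s ∈ Set.Ici (0 : ℝ), HasDerivAt (fun s => z₂ s - z₁ s / (1 + z₁ s))
        ((1 / ε) * (-(z₂ s - z₁ s / (1 + z₁ s)))) s := by
      intro s hs
      have hne : (1 + z₁ s) ≠ 0 := by have := hz₁pos s hs; positivity
      have hden : HasDerivAt (fun s => 1 + z₁ s) (-(z₁ s)) s :=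
        (hz₁ s hs).const_add 1
      have hq : HasDerivAt (fun s => z₁ s / (1 + z₁ s))
          ((-(z₁ s) * (1 + z₁ s) - z₁ s * (-(z₁ s))) / (1 + z₁ s) ^ 2) s :=
        (hz₁ s hs).div hden hne
      have h := (hz₂ s hs).sub hq
      refine h.congr_deriv ?_
      field_simp
      ring
    have hF : ∀ s ∈ Set.Ici (0 : ℝ), HasDerivAt
        (fun s => (z₂ s - z₁ s / (1 + z₁ s)) * Real.exp (s / ε)) 0 s := by
      intro s hs
      have hexp : HasDerivAt (fun s : ℝ => Real.exp (s / ε)) (Real.exp (s / ε) * (1 / ε)) s := by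
        have : HasDerivAt (fun s : ℝ => s / ε) (1 / ε) s := (hasDerivAt_id s).div_const ε
        exact (Real.hasDerivAt_exp _).comp s this
      have h := (hδ s hs).mul hexp
      have h0 : (1 / ε) * (-(z₂ s - z₁ s / (1 + z₁ s))) * Real.exp (s / ε)
          + (z₂ s - z₁ s / (1 + z₁ s)) * (Real.exp (s / ε) * (1 / ε)) = 0 := by ring
      exact h0 ▸ h
    have hconst : (z₂ t - z₁ t / (1 + z₁ t)) * Real.exp (t / ε)
        = (z₂ 0 - z₁ 0 / (1 + z₁ 0)) * Real.exp (0 / ε) := by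
      apply constant_of_has_deriv_right_zero
        (f := fun s => (z₂ s - z₁ s / (1 + z₁ s)) * Real.exp (s / ε)) (a := 0) (b := t)
      · intro s hs
        exact (hF s hs.1).continuousAt.continuousWithinAt
      · intro s hs
        exact (hF s hs.1).hasDerivWithinAt
      · exact ⟨ht, le_refl t⟩
    have hexpne : Real.exp (t / ε) ≠ 0 := Real.exp_ne_zero _
    have : z₂ t - z₁ t / (1 + z₁ t)
        = (z₂ 0 - z₁ 0 / (1 + z₁ 0)) * Real.exp (0 / ε) / Real.exp (t / ε) := by
      field_simp at hconst ⊢; linarith [hconst]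
    rw [this]
    rw [neg_div, Real.exp_neg]
    simp
    ring
  constructor
  · intro t ht
    rw [key t ht, abs_mul, abs_of_pos (Real.exp_pos _)]
  · have hlim : Tendsto (fun t : ℝ => (z₂ 0 - z₁ 0 / (1 + z₁ 0)) * Real.exp (-t / ε))
        atTop (nhds 0) := by
      have h1 : Tendsto (fun t : ℝ => -t / ε) atTop atBot := by
        apply Tendsto.atBot_div_const hε
        exact tendsto_neg_atTop_atBot
      have h2 := Real.tendsto_exp_atBot.comp h1
      simpa using h2.const_mul (z₂ 0 - z₁ 0 / (1 + z₁ 0))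
    apply hlim.congr'
    filter_upwards [eventually_ge_atTop (0:ℝ)] with t ht
    exact (key t ht).symm
end

section
/- First integral of the Davis-Skodje flow: for every ε > 0, the function I(z₁, z₂) = (z₂ - z₁/(1+z₁)) · z₁^{-1/ε} on the half-plane {z₁ > 0} is constant along every solution of the Davis-Skodje system whose first component remains positive; i.e., if z is a solution on an interval J with z₁(t) > 0 for all t ∈ J, then t ↦ I(z₁(t), z₂(t)) is constant on J. -/
open Real

/-- First integral of the Davis-Skodje flow: the function
`I(z₁, z₂) = (z₂ - z₁/(1+z₁)) · z₁^(-1/ε)` is constant along every solution whose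
first component remains positive. -/
theorem davisSkodje_first_integral (ε : ℝ) (hε : 0 < ε)
    (J : Set ℝ) (hJ : J.OrdConnected) (z₁ z₂ : ℝ → ℝ)
    (hz₁ : ∀ t ∈ J, HasDerivAt z₁ (-(z₁ t)) t)
    (hz₂ : ∀ t ∈ J, HasDerivAt z₂
      ((1 / ε) * (-(z₂ t) + z₁ t / (1 + z₁ t)) - z₁ t / (1 + z₁ t) ^ 2) t)
    (hpos : ∀ t ∈ J, 0 < z₁ t) :
    ∀ s ∈ J, ∀ t ∈ J,
      (z₂ s - z₁ s / (1 + z₁ s)) * z₁ s ^ (-1 / ε) =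
        (z₂ t - z₁ t / (1 + z₁ t)) * z₁ t ^ (-1 / ε) := by
  set f : ℝ → ℝ := fun t => (z₂ t - z₁ t / (1 + z₁ t)) * z₁ t ^ (-1 / ε) with hf
  have hεne : ε ≠ 0 := ne_of_gt hε
  have key : ∀ t ∈ J, HasDerivAt f 0 t := by
    intro t ht
    have hx : 0 < z₁ t := hpos t ht
    have hxne : z₁ t ≠ 0 := ne_of_gt hx
    have h1x : (1 : ℝ) + z₁ t ≠ 0 := by positivity
    have hdiv : HasDerivAt (fun u => z₁ u / (1 + z₁ u))
        ((-(z₁ t) * (1 + z₁ t) - z₁ t * (0 + -(z₁ t))) / (1 + z₁ t) ^ 2) t :=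
      (hz₁ t ht).div ((hasDerivAt_const t (1 : ℝ)).add (hz₁ t ht)) h1x
    have hg : HasDerivAt (fun u => z₂ u - z₁ u / (1 + z₁ u))
        (((1 / ε) * (-(z₂ t) + z₁ t / (1 + z₁ t)) - z₁ t / (1 + z₁ t) ^ 2) -
          (-(z₁ t) * (1 + z₁ t) - z₁ t * (0 + -(z₁ t))) / (1 + z₁ t) ^ 2) t :=
      (hz₂ t ht).sub hdiv
    have hp : HasDerivAt (fun u => z₁ u ^ (-1 / ε))
        (-(z₁ t) * (-1 / ε) * z₁ t ^ (-1 / ε - 1)) t :=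
      (hz₁ t ht).rpow_const (Or.inl hxne)
    have hprod := hg.mul hp
    convert hprod using 1
    case e'_4 => rfl
    case e'_5 => rfl
    case e'_8 => rfl
    have hsub : z₁ t ^ (-1 / ε - 1) = z₁ t ^ (-1 / ε) / z₁ t :=
      Real.rpow_sub_one hxne _
    rw [hsub]
    field_simp
    ring
  have hconv : Convex ℝ J := by
    rw [convex_iff_ordConnected]; exact hJ
  intro s hs t ht
  have hbound := hconv.norm_image_sub_le_of_norm_hasFDerivWithin_le
    (f := f) (C := 0)
    (fun u hu => ((key u hu).hasFDerivAt).hasFDerivWithinAt)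
    (fun u hu => by simp) ht hs
  have : ‖f s - f t‖ ≤ 0 := by simpa using hbound
  have : f s = f t := by
    have := norm_le_zero_iff.mp this
    linarith [sub_eq_zero.mp this]
  simpa [hf] using this
end

section
/- Characterization of the slow invariant manifold by backward boundedness: let ε > 0 and let z = (z₁, z₂) : ℝ → ℝ² be a solution of the Davis-Skodje system defined on all of ℝ with z₁(0) > 0. If the second component z₂ is bounded on (-∞, 0], then z₂(t) = z₁(t)/(1+z₁(t)) for all t ∈ ℝ, i.e. the trajectory lies entirely on the slow invariant manifold. Consequently, the graph of h(x) = x/(1+x) is the unique invariant graph over {z₁ > 0} consisting of solutions bounded in backward time. -/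
open Real

/-- Characterization of the Davis-Skodje slow invariant manifold by backward boundedness:
a globally defined solution with `z₁(0) > 0` whose second component is bounded on
`(-∞, 0]` lies entirely on the graph of `h(x) = x/(1+x)`. -/
theorem davisSkodje_backward_bounded_on_SIM (ε : ℝ) (hε : 0 < ε) (z₁ z₂ : ℝ → ℝ)
    (hz₁ : ∀ t : ℝ, HasDerivAt z₁ (-(z₁ t)) t)
    (hz₂ : ∀ t : ℝ, HasDerivAt z₂
      ((1 / ε) * (-(z₂ t) + z₁ t / (1 + z₁ t)) - z₁ t / (1 + z₁ t) ^ 2) t)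
    (hpos : 0 < z₁ 0)
    (hbdd : ∃ M : ℝ, ∀ t ≤ (0 : ℝ), |z₂ t| ≤ M) :
    ∀ t : ℝ, z₂ t = z₁ t / (1 + z₁ t) := by
  obtain ⟨M, hM⟩ := hbdd
  -- z₁ t * exp t is constant
  have hzc : ∀ t : ℝ, z₁ t * Real.exp t = z₁ 0 := by
    have hd : ∀ t : ℝ, HasDerivAt (fun t => z₁ t * Real.exp t) 0 t := by
      intro t
      have : HasDerivAt (fun t => z₁ t * Real.exp t) _ t := (hz₁ t).mul (Real.hasDerivAt_exp t)
      convert this using 1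
      ring
    have hdiff : Differentiable ℝ (fun t => z₁ t * Real.exp t) := fun t => (hd t).differentiableAt
    intro t
    have := is_const_of_deriv_eq_zero hdiff (fun t => (hd t).deriv) t 0
    simpa using this
  have hz₁pos : ∀ t : ℝ, 0 < z₁ t := by
    intro t
    have h1 : z₁ t = z₁ 0 / Real.exp t := by
      rw [← hzc t]; field_simp
    rw [h1]
    positivity
  have hden : ∀ t : ℝ, (0:ℝ) < 1 + z₁ t := fun t => by linarith [hz₁pos t]
  set w : ℝ → ℝ := fun t => z₂ t - z₁ t / (1 + z₁ t) with hw_def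
  -- derivative of w
  have hw : ∀ t : ℝ, HasDerivAt w (-(1/ε) * w t) t := by
    intro t
    have hh : HasDerivAt (fun t => z₁ t / (1 + z₁ t)) _ t := (hz₁ t).div ((hasDerivAt_const t (1:ℝ)).add (hz₁ t)) (ne_of_gt (hden t))
    have : HasDerivAt w _ t := (hz₂ t).sub hh
    convert this using 1
    have h2 : (1 + z₁ t) ≠ 0 := ne_of_gt (hden t)
    simp only [hw_def]
    field_simp
    ring
  -- w t * exp (t/ε) constant
  have hexp : ∀ t : ℝ, HasDerivAt (fun t : ℝ => Real.exp (t / ε)) (Real.exp (t / ε) * (1/ε)) t := by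
    intro t
    have : HasDerivAt (fun t : ℝ => t / ε) (1/ε) t := by
      simpa using (hasDerivAt_id t).div_const ε
    exact this.exp
  have hgd : ∀ t : ℝ, HasDerivAt (fun t => w t * Real.exp (t / ε)) 0 t := by
    intro t
    have : HasDerivAt (fun t => w t * Real.exp (t / ε)) _ t := (hw t).mul (hexp t)
    convert this using 1
    ring
  have hgc : ∀ t : ℝ, w t * Real.exp (t / ε) = w 0 := by
    have hdiff : Differentiable ℝ (fun t => w t * Real.exp (t / ε)) :=
      fun t => (hgd t).differentiableAt
    intro t
    have := is_const_of_deriv_eq_zero hdiff (fun t => (hgd t).deriv) t 0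
    simpa using this
  -- bound on w for t ≤ 0
  have hwbd : ∀ t ≤ (0:ℝ), |w t| ≤ M + 1 := by
    intro t ht
    have h1 : |z₁ t / (1 + z₁ t)| ≤ 1 := by
      rw [abs_of_nonneg (le_of_lt (div_pos (hz₁pos t) (hden t)))]
      rw [div_le_one (hden t)]
      linarith [hz₁pos t]
    calc |w t| ≤ |z₂ t| + |z₁ t / (1 + z₁ t)| := abs_sub _ _
      _ ≤ M + 1 := add_le_add (hM t ht) h1
  -- w 0 = 0
  have hM0 : (0:ℝ) ≤ M := le_trans (abs_nonneg _) (hM 0 le_rfl)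
  have hw0 : w 0 = 0 := by
    by_contra h0
    have habs : 0 < |w 0| := abs_pos.mpr h0
    set C : ℝ := (M + 1) / |w 0| with hC
    set t : ℝ := -(ε * (C + 1)) with ht
    have ht0 : t ≤ 0 := by
      have : 0 ≤ ε * (C + 1) := by positivity
      simp [ht]; linarith
    have hwt : |w t| = |w 0| * Real.exp (-(t / ε)) := by
      have := hgc t
      have h2 : w t = w 0 * Real.exp (-(t / ε)) := by
        rw [Real.exp_neg]
        field_simp at this ⊢
        linarith [this]
      rw [h2, abs_mul, abs_of_pos (Real.exp_pos _)]
    have harg : -(t / ε) = C + 1 := by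
      rw [ht]; field_simp
    have hgt : M + 1 < |w 0| * Real.exp (-(t / ε)) := by
      rw [harg]
      have h3 : C + 2 ≤ Real.exp (C + 1) := by
        have := Real.add_one_le_exp (C + 1)
        linarith
      have hC0 : 0 ≤ C := by positivity
      have h4 : |w 0| * (C + 2) ≤ |w 0| * Real.exp (C + 1) :=
        mul_le_mul_of_nonneg_left h3 (le_of_lt habs)
      have h5 : |w 0| * C = M + 1 := by
        rw [hC]; field_simp
      nlinarith
    have := hwbd t ht0
    rw [hwt] at this
    linarith
  have hwz : ∀ t : ℝ, w t = 0 := by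
    intro t
    have := hgc t
    rw [hw0] at this
    exact (mul_eq_zero.mp this).resolve_right (Real.exp_ne_zero _)
  intro t
  have := hwz t
  simp only [hw_def] at this
  linarith
end
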